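/- arXiv:0912.5413 — 5 statements merged into one kernel-verified Lean document; each statement's English description precedes it below -/
import Mathlib

section
/- A nonconstant polynomial over ℂ_p maps closed balls onto closed balls: for P ∈ ℂ_p[z] nonconstant with P(0)=0 and r ≥ 0, one has P(B•(0,r)) = B•(0, M(r)) where M(r) = maxₖ |aₖ| r^k (P = ∑ aₖ z^k). -/
open Polynomial Metric

/-- Key lemma: if all roots of a nonzero polynomial `Q` over an algebraically
closed ultrametric field have norm `> r`, then `‖Q.coeff j‖ * r^j < ‖Q.coeff 0‖`
for all `j ≥ 1`. -/
lemma aux_coeff_lt {K : Type*} [NontriviallyNormedField K] [IsUltrametricDist K]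
    [IsAlgClosed K] {r : ℝ} (hr : 0 ≤ r) :
    ∀ (n : ℕ) (Q : Polynomial K), Q ≠ 0 → Q.natDegree = n →
      (∀ z, Q.IsRoot z → r < ‖z‖) →
      ∀ j, 1 ≤ j → ‖Q.coeff j‖ * r ^ j < ‖Q.coeff 0‖ := by
  intro n
  induction n with
  | zero =>
    intro Q hQ hdeg hroots j hj
    have hj0 : Q.coeff j = 0 := Q.coeff_eq_zero_of_natDegree_lt (by omega)
    have hc0 : Q.coeff 0 ≠ 0 := by
      intro h
      have : Q.IsRoot 0 := by
        simp [Polynomial.IsRoot, ← Polynomial.coeff_zero_eq_eval_zero, h]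
      exact absurd (hroots 0 this) (by simp [not_lt, hr])
    simp [hj0, norm_pos_iff.mpr hc0]
  | succ n ih =>
    intro Q hQ hdeg hroots j hj
    obtain ⟨z, hz⟩ := IsAlgClosed.exists_root Q (by
      rw [Polynomial.degree_eq_natDegree hQ, hdeg]; exact_mod_cast Nat.succ_ne_zero n)
    have hzr : r < ‖z‖ := hroots z hz
    have hz0 : 0 < ‖z‖ := lt_of_le_of_lt hr hzr
    set Q₁ := Q /ₘ (X - C z) with hQ₁def
    have hfac : (X - C z) * Q₁ = Q := (Polynomial.mul_divByMonic_eq_iff_isRoot).mpr hz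
    have hQ₁ne : Q₁ ≠ 0 := by
      intro h; rw [h, mul_zero] at hfac; exact hQ hfac.symm
    have hdeg₁ : Q₁.natDegree = n := by
      have := Polynomial.natDegree_mul (Polynomial.X_sub_C_ne_zero z) hQ₁ne
      rw [hfac, hdeg, Polynomial.natDegree_X_sub_C] at this
      omega
    have hroots₁ : ∀ y, Q₁.IsRoot y → r < ‖y‖ := by
      intro y hy
      refine hroots y ?_
      have : Q.eval y = (y - z) * Q₁.eval y := by
        rw [← hfac]; simp
      simp [Polynomial.IsRoot, this, hy.eq_zero]
    have IH := ih Q₁ hQ₁ne hdeg₁ hroots₁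
    have hc0 : 0 < ‖Q₁.coeff 0‖ := by
      rcases eq_or_ne (Q₁.coeff 0) 0 with h | h
      · exfalso
        have : Q₁.IsRoot 0 := by
          simp [Polynomial.IsRoot, ← Polynomial.coeff_zero_eq_eval_zero, h]
        exact absurd (hroots₁ 0 this) (by simp [not_lt, hr])
      · exact norm_pos_iff.mpr h
    -- coeff 0 of Q
    have hQ0 : ‖Q.coeff 0‖ = ‖z‖ * ‖Q₁.coeff 0‖ := by
      rw [← hfac, Polynomial.mul_coeff_zero]
      simp [norm_mul]
    -- coeff j of Q for j = m + 1
    obtain ⟨m, rfl⟩ : ∃ m, j = m + 1 := ⟨j - 1, by omega⟩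
    have hcoeff : Q.coeff (m + 1) = Q₁.coeff m - z * Q₁.coeff (m + 1) := by
      rw [← hfac, sub_mul, Polynomial.coeff_sub, Polynomial.coeff_X_mul]
      simp [Polynomial.coeff_C_mul]
    rw [hcoeff, hQ0]
    have hb1 : ‖Q₁.coeff m‖ * r ^ (m + 1) < ‖z‖ * ‖Q₁.coeff 0‖ := by
      have h1 : ‖Q₁.coeff m‖ * r ^ m ≤ ‖Q₁.coeff 0‖ := by
        rcases Nat.eq_zero_or_pos m with rfl | hm
        · simp
        · exact (IH m hm).le
      calc ‖Q₁.coeff m‖ * r ^ (m + 1) = (‖Q₁.coeff m‖ * r ^ m) * r := by ring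
        _ ≤ ‖Q₁.coeff 0‖ * r := by
            exact mul_le_mul_of_nonneg_right h1 hr
        _ < ‖Q₁.coeff 0‖ * ‖z‖ := by
            exact mul_lt_mul_of_pos_left hzr hc0
        _ = ‖z‖ * ‖Q₁.coeff 0‖ := mul_comm _ _
    have hb2 : ‖z * Q₁.coeff (m + 1)‖ * r ^ (m + 1) < ‖z‖ * ‖Q₁.coeff 0‖ := by
      rw [norm_mul, mul_assoc]
      exact mul_lt_mul_of_pos_left (IH (m + 1) (by omega)) hz0
    calc ‖Q₁.coeff m - z * Q₁.coeff (m + 1)‖ * r ^ (m + 1)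
        ≤ max ‖Q₁.coeff m‖ ‖z * Q₁.coeff (m + 1)‖ * r ^ (m + 1) := by
          refine mul_le_mul_of_nonneg_right ?_ (pow_nonneg hr _)
          have h := IsUltrametricDist.norm_add_le_max (Q₁.coeff m) (-(z * Q₁.coeff (m + 1)))
          rw [norm_neg] at h
          rw [sub_eq_add_neg]
          exact h
      _ = max (‖Q₁.coeff m‖ * r ^ (m + 1)) (‖z * Q₁.coeff (m + 1)‖ * r ^ (m + 1)) := by
          rw [max_mul_of_nonneg _ _ (pow_nonneg hr _)]
      _ < ‖z‖ * ‖Q₁.coeff 0‖ := max_lt hb1 hb2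

/-- A nonconstant polynomial `P` over `ℂ_p` with `P(0) = 0` maps the closed ball
`B•(0,r)` onto the closed ball `B•(0, M(r))`, where `M(r) = max_k ‖aₖ‖ r^k`. -/
theorem polynomial_image_closedBall
    {K : Type*} [NontriviallyNormedField K] [IsUltrametricDist K]
    [CompleteSpace K] [IsAlgClosed K]
    (P : Polynomial K) (hP : 0 < P.natDegree) (h0 : P.eval 0 = 0)
    (r : ℝ) (hr : 0 ≤ r) :
    (fun z => P.eval z) '' closedBall (0 : K) r =
      closedBall (0 : K) (sSup (Set.range fun k => ‖P.coeff k‖ * r ^ k)) := by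
  set f : ℕ → ℝ := fun k => ‖P.coeff k‖ * r ^ k with hf
  set n := P.natDegree with hn
  have hP0 : P.coeff 0 = 0 := by rw [Polynomial.coeff_zero_eq_eval_zero, h0]
  have hf0 : f 0 = 0 := by simp [hf, hP0]
  -- the sup is attained on Finset.range (n+1)
  have hne : (Finset.range (n + 1)).Nonempty := ⟨0, by simp⟩
  set B := (Finset.range (n + 1)).sup' hne f with hB
  have hle : ∀ k, f k ≤ B := by
    intro k
    rcases le_or_gt k n with h | h
    · exact Finset.le_sup' f (Finset.mem_range.mpr (by omega))
    · have : P.coeff k = 0 := P.coeff_eq_zero_of_natDegree_lt h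
      calc f k = 0 := by simp [hf, this]
        _ = f 0 := hf0.symm
        _ ≤ B := Finset.le_sup' f (Finset.mem_range.mpr (by omega))
  have hbdd : BddAbove (Set.range f) := ⟨B, by rintro _ ⟨k, rfl⟩; exact hle k⟩
  obtain ⟨k₀, hk₀mem, hk₀⟩ := Finset.exists_mem_eq_sup' hne f
  have hsup : sSup (Set.range f) = f k₀ := by
    refine le_antisymm (csSup_le ⟨f 0, ⟨0, rfl⟩⟩ ?_) (le_csSup hbdd ⟨k₀, rfl⟩)
    rintro _ ⟨k, rfl⟩
    exact (hle k).trans_eq (hB ▸ hk₀)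
  have hM0 : 0 ≤ sSup (Set.range f) := by
    rw [← hf0]; exact le_csSup hbdd ⟨0, rfl⟩
  ext w
  simp only [Set.mem_image, mem_closedBall, dist_zero_right, dist_eq_norm, sub_zero]
  constructor
  · rintro ⟨z, hz, rfl⟩
    rw [Polynomial.eval_eq_sum_range]
    refine IsUltrametricDist.norm_sum_le_of_forall_le_of_nonneg hM0 ?_
    intro i _
    calc ‖P.coeff i * z ^ i‖ = ‖P.coeff i‖ * ‖z‖ ^ i := by rw [norm_mul, norm_pow]
      _ ≤ ‖P.coeff i‖ * r ^ i :=
          mul_le_mul_of_nonneg_left (pow_le_pow_left₀ (norm_nonneg z) hz i) (norm_nonneg _)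
      _ ≤ sSup (Set.range f) := le_csSup hbdd ⟨i, rfl⟩
  · intro hw
    rcases eq_or_ne w 0 with rfl | hwne
    · exact ⟨0, by simpa using hr, h0⟩
    by_contra hcon
    push_neg at hcon
    set Q := P - C w with hQdef
    have hQdeg : Q.natDegree = n := Polynomial.natDegree_sub_C
    have hQne : Q ≠ 0 := by
      intro h
      rw [h, Polynomial.natDegree_zero] at hQdeg
      omega
    have hroots : ∀ z, Q.IsRoot z → r < ‖z‖ := by
      intro z hz
      by_contra h
      push_neg at h
      have : P.eval z = w := by
        have := hz.eq_zero
        simp only [hQdef, Polynomial.eval_sub, Polynomial.eval_C, sub_eq_zero] at this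
        exact this
      exact hcon z h this
    have key := aux_coeff_lt hr n Q hQne hQdeg hroots
    have hQ0 : ‖Q.coeff 0‖ = ‖w‖ := by
      simp [hQdef, hP0]
    have hwpos : 0 < ‖w‖ := norm_pos_iff.mpr hwne
    have hk₀pos : 1 ≤ k₀ := by
      by_contra h
      push_neg at h
      interval_cases k₀
      rw [hsup, hf0] at hw
      exact absurd (lt_of_lt_of_le hwpos hw) (lt_irrefl 0)
    have hQcoeff : Q.coeff k₀ = P.coeff k₀ := by
      simp only [hQdef, Polynomial.coeff_sub, Polynomial.coeff_C,
        if_neg (by omega : ¬ k₀ = 0), sub_zero]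
    have := key k₀ hk₀pos
    rw [hQcoeff, hQ0] at this
    have : f k₀ < ‖w‖ := this
    rw [hsup] at hw
    exact absurd (lt_of_le_of_lt hw this) (lt_irrefl _)
end

section
/- Let P ∈ ℂ_p[z] and let B be a closed ball in ℂ_p such that P(B) strictly contains B. Then P has a fixed point in B. -/
open Polynomial Metric

/-- If a polynomial has no roots in a closed ball, its norm is constant on that ball
(over an algebraically closed ultrametric field). -/
lemma norm_eval_eq_of_no_root_mem
    {K : Type*} [NontriviallyNormedField K] [IsUltrametricDist K] [IsAlgClosed K]
    (Q : Polynomial K) (a z : K) (r : ℝ) (hr : 0 ≤ r) (hz : ‖z - a‖ ≤ r)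
    (hroots : ∀ ρ ∈ Q.roots, r < ‖ρ - a‖) :
    ‖Q.eval z‖ = ‖Q.eval a‖ := by
  rcases eq_or_ne Q 0 with rfl | hQ
  · simp
  have hsplit : Q.Splits := IsAlgClosed.splits Q
  have hfact := hsplit.eq_prod_roots
  have key : ∀ w : K, ‖w - a‖ ≤ r →
      ‖Q.eval w‖ = ‖Q.leadingCoeff‖ * (Q.roots.map fun ρ => ‖a - ρ‖).prod := by
    intro w hw
    conv_lhs => rw [hfact]
    rw [eval_mul, eval_C, eval_multiset_prod, norm_mul, Multiset.map_map]
    congr 1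
    have hmp : ∀ (m : Multiset K), ‖m.prod‖ = (m.map fun x => ‖x‖).prod := fun m => by
      simpa using (Multiset.prod_hom m (normHom : K →*₀ ℝ)).symm
    rw [hmp, Multiset.map_map]
    refine congrArg Multiset.prod (Multiset.map_congr rfl fun ρ hρ => ?_)
    simp only [Function.comp_apply, eval_sub, eval_X, eval_C]
    have h1 : ‖w - a‖ < ‖a - ρ‖ := by
      calc ‖w - a‖ ≤ r := hw
        _ < ‖ρ - a‖ := hroots ρ hρ
        _ = ‖a - ρ‖ := norm_sub_rev _ _
    have h2 : w - ρ = (w - a) + (a - ρ) := by ring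
    rw [h2, IsUltrametricDist.norm_add_eq_max_of_norm_ne_norm h1.ne,
      max_eq_right h1.le]
  rw [key z hz, key a (by simpa using hr)]

/-- If a polynomial `P` over `ℂ_p` maps a closed ball `B` onto a set strictly
containing `B`, then `P` has a fixed point in `B`. -/
theorem fixed_point_of_image_ssuperset
    {K : Type*} [NontriviallyNormedField K] [IsUltrametricDist K]
    [CompleteSpace K] [IsAlgClosed K]
    (P : Polynomial K) (a : K) (r : ℝ) (hr : 0 ≤ r)
    (h : closedBall a r ⊂ (fun z => P.eval z) '' closedBall a r) :
    ∃ z ∈ closedBall a r, P.eval z = z := by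
  by_contra hfix
  push_neg at hfix
  set Q : Polynomial K := P - X with hQdef
  have hQeval : ∀ w : K, Q.eval w = P.eval w - w := by
    intro w; simp [hQdef]
  have hQroots : ∀ ρ ∈ Q.roots, r < ‖ρ - a‖ := by
    intro ρ hρ
    have hroot : Q.eval ρ = 0 := by
      have := Polynomial.isRoot_of_mem_roots hρ
      exact this
    have hfixρ : P.eval ρ = ρ := by
      have := hQeval ρ; rw [hroot] at this; exact sub_eq_zero.mp this.symm
    by_contra hle
    push_neg at hle
    exact hfix ρ (by simpa [mem_closedBall, dist_eq_norm] using hle) hfixρ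
  have hconst : ∀ z ∈ closedBall a r, ‖Q.eval z‖ = ‖Q.eval a‖ := by
    intro z hz
    exact norm_eval_eq_of_no_root_mem Q a z r hr
      (by simpa [mem_closedBall, dist_eq_norm] using hz) hQroots
  set ρ₀ : ℝ := ‖Q.eval a‖ with hρ₀
  rcases le_or_gt ρ₀ r with hle | hlt
  · -- then P maps the ball into itself, contradicting strictness
    obtain ⟨w, hwim, hwnot⟩ := Set.exists_of_ssubset h
    obtain ⟨z, hz, hzw⟩ := hwim
    apply hwnot
    have h1 : ‖P.eval z - a‖ ≤ r := by
      have h2 : P.eval z - a = Q.eval z + (z - a) := by rw [hQeval]; ring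
      rw [h2]
      refine le_trans (IsUltrametricDist.norm_add_le_max _ _) (max_le ?_ ?_)
      · rw [hconst z hz]; exact hle
      · simpa [mem_closedBall, dist_eq_norm] using hz
    rw [← hzw]
    simpa [mem_closedBall, dist_eq_norm] using h1
  · -- then `a` has a preimage `z` in the ball with `‖a - z‖ = ρ₀ > r`, contradiction
    have ha : a ∈ (fun z => P.eval z) '' closedBall a r :=
      h.subset (mem_closedBall_self hr)
    obtain ⟨z, hz, hza⟩ := ha
    have hza' : P.eval z = a := hza
    have h1 : ‖Q.eval z‖ = ρ₀ := hconst z hz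
    have h2 : Q.eval z = a - z := by rw [hQeval, hza']
    have h3 : ‖a - z‖ ≤ r := by
      rw [norm_sub_rev]; simpa [mem_closedBall, dist_eq_norm] using hz
    rw [h2] at h1
    exact absurd h1 (h3.trans_lt hlt).ne
end

section
/- Every rational map R ∈ ℂ_p(z) of degree d ≥ 2 has a fixed point in P¹(ℂ_p) that is attracting or indifferent, i.e. some fixed point z₀ with |R'(z₀)| ≤ 1. -/
open Polynomial Finset

section Aux

variable {K : Type*} [Field K] [DecidableEq K]

lemma basis_eq_C_nodalWeight_mul_nodal (s : Finset K) (i : K) :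
    Lagrange.basis s id i
      = C (Lagrange.nodalWeight s id i) * Lagrange.nodal (s.erase i) id := by
  rw [Lagrange.basis, Lagrange.nodalWeight, Lagrange.nodal_eq, map_prod, ← prod_mul_distrib]
  exact prod_congr rfl fun j hj => rfl

lemma coeff_eq_sum_eval_mul_nodalWeight (s : Finset K) (f : K[X])
    (hdeg : f.degree < #s) :
    f.coeff (#s - 1) = ∑ i ∈ s, f.eval i * Lagrange.nodalWeight s id i := by
  have hinj : Set.InjOn id (s : Set K) := Function.injective_id.injOn
  conv_lhs => rw [Lagrange.eq_interpolate hinj hdeg]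
  rw [Lagrange.interpolate_apply, finset_sum_coeff]
  refine sum_congr rfl fun i hi => ?_
  rw [basis_eq_C_nodalWeight_mul_nodal, ← mul_assoc, ← C_mul, coeff_C_mul]
  have h1 : (Lagrange.nodal (s.erase i) id).natDegree = #s - 1 := by
    rw [Lagrange.natDegree_nodal, card_erase_of_mem hi]
  rw [← h1, Lagrange.nodal_monic.coeff_natDegree, mul_one, id]

end Aux

/-- (Benedetto) Every rational map `R = P/Q` of degree `d ≥ 2` over `ℂ_p` has a fixed
point in `P¹(ℂ_p)` which is attracting or indifferent, i.e. whose multiplier has norm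
`≤ 1`. Either this fixed point is an affine point `z₀` (with `Q(z₀) ≠ 0`,
`R(z₀) = z₀` and `‖R'(z₀)‖ ≤ 1`), or it is the point `∞`: `∞` is fixed exactly when
`deg P > deg Q`, it is superattracting when `deg P ≥ deg Q + 2`, and when
`deg P = deg Q + 1` its multiplier is the ratio `lc(Q)/lc(P)` of leading
coefficients. -/
theorem exists_nonrepelling_fixed_point
    {K : Type*} [NontriviallyNormedField K] [IsUltrametricDist K]
    [CompleteSpace K] [IsAlgClosed K] [CharZero K]
    (P Q : Polynomial K) (hcop : IsCoprime P Q) (hQ0 : Q ≠ 0)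
    (hdeg : 2 ≤ max P.natDegree Q.natDegree) :
    (∃ z₀ : K, Q.eval z₀ ≠ 0 ∧ P.eval z₀ = z₀ * Q.eval z₀ ∧
      ‖(P.derivative.eval z₀ * Q.eval z₀ - P.eval z₀ * Q.derivative.eval z₀)
          / (Q.eval z₀) ^ 2‖ ≤ 1) ∨
    (Q.natDegree < P.natDegree ∧
      (Q.natDegree + 2 ≤ P.natDegree ∨ ‖Q.leadingCoeff / P.leadingCoeff‖ ≤ 1)) := by
  classical
  by_contra hcon
  push_neg at hcon
  obtain ⟨hleft, hright⟩ := hcon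
  set q := Q.natDegree with hq
  set F : K[X] := P - X * Q with hF
  have hlcQ : Q.leadingCoeff ≠ 0 := leadingCoeff_ne_zero.mpr hQ0
  have hlcQn : 0 < ‖Q.leadingCoeff‖ := norm_pos_iff.mpr hlcQ
  have hPle : P.natDegree ≤ q + 1 := by
    by_contra h
    push_neg at h
    have := (hright (by omega)).1
    omega
  -- the coefficient of F in degree q+1 has the same norm as lc Q
  have hFc : ‖F.coeff (q + 1)‖ = ‖Q.leadingCoeff‖ := by
    have hXQ : (X * Q).coeff (q + 1) = Q.leadingCoeff := by
      rw [coeff_X_mul]; rfl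
    rcases lt_or_eq_of_le hPle with hlt | heq
    · have : P.coeff (q + 1) = 0 := coeff_eq_zero_of_natDegree_lt (by omega)
      simp [hF, coeff_sub, this, hXQ]
    · have hP0 : P ≠ 0 := fun h => by simp [h] at heq
      have hlcP : P.leadingCoeff ≠ 0 := leadingCoeff_ne_zero.mpr hP0
      have hPc : P.coeff (q + 1) = P.leadingCoeff := by
        rw [← heq]; rfl
      have hgt : 1 < ‖Q.leadingCoeff / P.leadingCoeff‖ := (hright (by omega)).2
      have hne : ‖P.leadingCoeff‖ < ‖Q.leadingCoeff‖ := by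
        rw [norm_div] at hgt
        exact (one_lt_div (norm_pos_iff.mpr hlcP)).mp hgt
      have := IsUltrametricDist.norm_add_eq_max_of_norm_ne_norm
        (x := P.leadingCoeff) (y := -Q.leadingCoeff) (by rw [norm_neg]; exact hne.ne)
      rw [coeff_sub, hPc, hXQ, sub_eq_add_neg, this, norm_neg, max_eq_right hne.le]
  have hFc0 : F.coeff (q + 1) ≠ 0 := by
    intro h; rw [h, norm_zero] at hFc; exact hlcQn.ne hFc
  have hFdeg : F.natDegree = q + 1 := by
    refine le_antisymm ?_ (le_natDegree_of_ne_zero hFc0)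
    refine (natDegree_sub_le _ _).trans ?_
    simp only [natDegree_mul X_ne_zero hQ0, natDegree_X]
    omega
  have hF0 : F ≠ 0 := fun h => hFc0 (by simp [h])
  have hlcF : F.leadingCoeff = F.coeff (q + 1) := by rw [leadingCoeff, hFdeg]
  -- key pointwise estimate at roots
  have key : ∀ z : K, F.eval z = 0 → Q.eval z ≠ 0 ∧
      ‖Q.eval z‖ < ‖F.derivative.eval z‖ := by
    intro z hz
    have hPz : P.eval z = z * Q.eval z :=
      sub_eq_zero.mp (by simpa [hF] using hz)
    have hQz : Q.eval z ≠ 0 := by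
      intro hQz
      obtain ⟨a, b, hab⟩ := hcop
      have := congrArg (eval z) hab
      simp [hQz, hPz] at this
    have hm := hleft z hQz hPz
    have hDz : F.derivative.eval z
        = P.derivative.eval z - Q.eval z - z * Q.derivative.eval z := by
      simp [hF, derivative_mul]; ring
    have hexpr : (P.derivative.eval z * Q.eval z - P.eval z * Q.derivative.eval z)
        / (Q.eval z) ^ 2 = (F.derivative.eval z + Q.eval z) / Q.eval z := by
      rw [hDz, hPz]; field_simp; ring
    refine ⟨hQz, ?_⟩
    rw [hexpr, norm_div] at hm
    have hQzn : 0 < ‖Q.eval z‖ := norm_pos_iff.mpr hQz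
    have h1 : ‖Q.eval z‖ < ‖F.derivative.eval z + Q.eval z‖ := by
      rw [lt_div_iff₀ hQzn] at hm; simpa using hm
    by_contra h2
    push_neg at h2
    have := IsUltrametricDist.norm_add_le_max (F.derivative.eval z) (Q.eval z)
    rw [max_eq_right h2] at this
    exact absurd h1 (not_lt.mpr this)
  -- roots are simple
  have hsplits : F.Splits := IsAlgClosed.splits F
  have hnodup : F.roots.Nodup := by
    rw [Multiset.nodup_iff_count_le_one]
    intro z
    rw [count_roots]
    by_contra h
    push_neg at h
    have h2 := (one_lt_rootMultiplicity_iff_isRoot hF0).mp h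
    have hz := key z h2.1
    rw [h2.2, norm_zero] at hz
    exact absurd hz.2 (not_lt.mpr (norm_nonneg _))
  set s : Finset K := F.roots.toFinset with hs
  have hsval : s.val = F.roots := Multiset.toFinset_val F.roots ▸ hnodup.dedup
  have hcard : #s = q + 1 := by
    rw [card_def, hsval, splits_iff_card_roots.mp hsplits, hFdeg]
  have hmem : ∀ z ∈ s, F.eval z = 0 := by
    intro z hz
    rw [hs, Multiset.mem_toFinset, mem_roots hF0] at hz
    exact hz
  have hinj : Set.InjOn id (s : Set K) := Function.injective_id.injOn
  -- factorization of F
  have hFeq : F = C F.leadingCoeff * Lagrange.nodal s id := by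
    rw [Lagrange.nodal_eq]
    conv_lhs => rw [hsplits.eq_prod_roots]
    congr 1
    rw [← hsval]
    rfl
  -- derivative at a root
  have hder : ∀ z ∈ s, F.derivative.eval z
      = F.leadingCoeff * (Lagrange.nodalWeight s id z)⁻¹ := by
    intro z hz
    have hd : F.derivative = C F.leadingCoeff * (Lagrange.nodal s id).derivative := by
      conv_lhs => rw [hFeq]
      rw [derivative_C_mul]
    rw [hd, eval_mul, eval_C, Lagrange.nodalWeight_eq_eval_derivative_nodal hz, inv_inv, id_eq]
  have hwne : ∀ z ∈ s, Lagrange.nodalWeight s id z ≠ 0 :=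
    fun z hz => Lagrange.nodalWeight_ne_zero hinj hz
  have hlcF0 : F.leadingCoeff ≠ 0 := leadingCoeff_ne_zero.mpr hF0
  -- the sum identity
  have hsum : ∑ z ∈ s, Q.eval z / F.derivative.eval z
      = Q.leadingCoeff / F.leadingCoeff := by
    have hQdeg : Q.degree < (#s : ℕ) := by
      rw [hcard]
      exact degree_le_natDegree.trans_lt (by exact_mod_cast lt_add_one q)
    have hco := coeff_eq_sum_eval_mul_nodalWeight s Q hQdeg
    rw [hcard] at hco
    simp only [Nat.add_sub_cancel] at hco
    have : ∀ z ∈ s, Q.eval z / F.derivative.eval z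
        = Q.eval z * Lagrange.nodalWeight s id z / F.leadingCoeff := by
      intro z hz
      rw [hder z hz, div_eq_mul_inv, mul_inv, inv_inv, div_eq_mul_inv]
      ring
    rw [sum_congr rfl this, ← sum_div, ← hco]
    rfl
  -- norms
  have hnorm1 : ‖∑ z ∈ s, Q.eval z / F.derivative.eval z‖ = 1 := by
    rw [hsum, norm_div, hlcF, hFc, div_self hlcQn.ne']
  have hne : s.Nonempty := by
    rw [← card_pos, hcard]; omega
  obtain ⟨z, hz, hle⟩ := IsUltrametricDist.exists_norm_finset_sum_le_of_nonempty hne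
    (fun z => Q.eval z / F.derivative.eval z)
  have hkey := key z (hmem z hz)
  have : ‖Q.eval z / F.derivative.eval z‖ < 1 := by
    rw [norm_div]
    exact (div_lt_one ((norm_nonneg _).trans_lt hkey.2)).mpr hkey.2
  rw [hnorm1] at hle
  exact lt_irrefl 1 (hle.trans_lt this)
end

section
/- Under the hypotheses of the ultrametric Schwarz lemma (|aₖ| ≤ c·r^{1−k} for all k ≥ 1), the map f(z) = ∑_{k≥1} aₖ z^k is c-Lipschitz on B°(0,r): |f(z) − f(w)| ≤ c|z − w| for all z, w ∈ B°(0,r). -/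
open IsUltrametricDist Finset

lemma pow_sub_pow_norm_le {K : Type*} [NontriviallyNormedField K] [IsUltrametricDist K]
    {r : ℝ} (hr : 0 < r) {z w : K} (hz : ‖z‖ ≤ r) (hw : ‖w‖ ≤ r) (k : ℕ) (hk : 1 ≤ k) :
    ‖z ^ k - w ^ k‖ ≤ r ^ (k - 1) * ‖z - w‖ := by
  rw [← geom_sum₂_mul, norm_mul]
  gcongr
  refine norm_sum_le_of_forall_le_of_nonneg (by positivity) fun i hi => ?_
  rw [norm_mul, norm_pow, norm_pow]
  calc ‖z‖ ^ i * ‖w‖ ^ (k - 1 - i) ≤ r ^ i * r ^ (k - 1 - i) := by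
        gcongr
    _ = r ^ (k - 1) := by
        rw [← pow_add]
        congr 1
        have := mem_range.mp hi
        omega

/-- Under the hypotheses of the ultrametric Schwarz lemma (`‖aₖ‖ ≤ c·r^(1−k)` for
`k ≥ 1`), the map `f(z) = ∑_{k≥1} aₖ z^k` is `c`-Lipschitz on `B°(0,r)`. -/
theorem schwarz_lipschitz
    {K : Type*} [NontriviallyNormedField K] [IsUltrametricDist K] [CompleteSpace K]
    (a : ℕ → K) (ha0 : a 0 = 0) (r : ℝ) (hr : 0 < r) (c : ℝ) (hc : 0 ≤ c)
    (ha : ∀ k : ℕ, 1 ≤ k → ‖a k‖ ≤ c * r ^ (1 - (k : ℤ)))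
    (z w : K) (hz : ‖z‖ < r) (hw : ‖w‖ < r) :
    ‖(∑' k, a k * z ^ k) - ∑' k, a k * w ^ k‖ ≤ c * ‖z - w‖ := by
  have hsum : ∀ u : K, ‖u‖ < r → Summable (fun k => a k * u ^ k) := by
    intro u hu
    apply Summable.of_norm_bounded (g := fun k => (c * r) * (‖u‖ / r) ^ k)
    · exact (summable_geometric_of_lt_one (by positivity)
        (by rw [div_lt_one hr]; exact hu)).mul_left _
    · intro k
      rcases Nat.eq_zero_or_pos k with rfl | hk
      · simp [ha0]; positivity
      · rw [norm_mul, norm_pow]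
        calc ‖a k‖ * ‖u‖ ^ k ≤ (c * r ^ (1 - (k : ℤ))) * ‖u‖ ^ k := by
              gcongr; exact ha k hk
          _ = (c * r) * (‖u‖ / r) ^ k := by
              rw [div_pow, zpow_sub₀ hr.ne', zpow_one, zpow_natCast]
              field_simp
  rw [← Summable.tsum_sub (hsum z hz) (hsum w hw)]
  have : ∀ k, a k * z ^ k - a k * w ^ k = a k * (z ^ k - w ^ k) := fun k => by ring
  simp_rw [this]
  refine norm_tsum_le_of_forall_le_of_nonneg (by positivity) fun k => ?_
  rcases Nat.eq_zero_or_pos k with rfl | hk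
  · simp [ha0]; positivity
  · rw [norm_mul]
    calc ‖a k‖ * ‖z ^ k - w ^ k‖
        ≤ (c * r ^ (1 - (k : ℤ))) * (r ^ (k - 1) * ‖z - w‖) := by
          exact mul_le_mul (ha k hk) (pow_sub_pow_norm_le hr hz.le hw.le k hk)
            (by positivity) (by positivity)
      _ = c * ‖z - w‖ * (r ^ (1 - (k : ℤ)) * r ^ ((k : ℤ) - 1)) := by
          rw [← zpow_natCast r (k - 1)]
          push_cast [hk]
          ring
      _ = c * ‖z - w‖ := by rw [← zpow_add₀ hr.ne']; simp
end

section
/- A power series f(z) = ∑_{k≥1} aₖ z^k over ℂ_p with |aₖ| ≤ r^{1−k} for all k is an isometry of B°(0,r) if and only if |f'(z)| = 1 for all z ∈ B°(0,r). -/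
open IsUltrametricDist Finset

section Helpers

variable {K : Type*} [NontriviallyNormedField K] [IsUltrametricDist K] [CompleteSpace K]

private lemma norm_eq_of_sub_norm_lt' {u v : K} (h : ‖u - v‖ < ‖u‖) : ‖v‖ = ‖u‖ := by
  have h2 : ‖-(u - v)‖ ≠ ‖u‖ := by rw [norm_neg]; exact ne_of_lt h
  have h3 := IsUltrametricDist.norm_add_eq_max_of_norm_ne_norm (x := u) (y := -(u - v))
    (fun hh => h2 hh.symm)
  have h4 : u + -(u - v) = v := by ring
  rw [h4, norm_neg] at h3
  rw [h3, max_eq_left h.le]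

variable (a : ℕ → K) (r : ℝ) (hr : 0 < r) (ha0 : a 0 = 0)
  (ha : ∀ k : ℕ, 1 ≤ k → ‖a k‖ ≤ r ^ (1 - (k : ℤ)))

include hr ha in
private lemma ha' : ∀ m : ℕ, ‖a (m + 1)‖ ≤ (r ^ m)⁻¹ := by
  intro m
  have := ha (m + 1) (by omega)
  have he : ((1 : ℤ) - ((m + 1 : ℕ) : ℤ)) = -(m : ℤ) := by push_cast; ring
  rwa [he, zpow_neg, zpow_natCast] at this

include hr ha ha0 in
private lemma term_bound {z : K} (hz : ‖z‖ < r) (k : ℕ) :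
    ‖a k * z ^ k‖ ≤ r * (‖z‖ / r) ^ k := by
  rcases k with _ | m
  · simp [ha0, hr.le]
  · have h1 : ‖a (m + 1) * z ^ (m + 1)‖ ≤ (r ^ m)⁻¹ * ‖z‖ ^ (m + 1) := by
      rw [norm_mul, norm_pow]
      exact mul_le_mul_of_nonneg_right (ha' a r hr ha m) (by positivity)
    refine h1.trans (le_of_eq ?_)
    rw [div_pow]
    field_simp
    ring

include hr ha ha0 in
private lemma summable_pow {z : K} (hz : ‖z‖ < r) :
    Summable (fun k => a k * z ^ k) := by
  have hq0 : 0 ≤ ‖z‖ / r := by positivity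
  have hq1 : ‖z‖ / r < 1 := (div_lt_one hr).mpr hz
  exact Summable.of_norm_bounded ((summable_geometric_of_lt_one hq0 hq1).mul_left r)
    (term_bound a r hr ha0 ha hz)

include hr ha in
private lemma summable_deriv {z : K} (hz : ‖z‖ < r) :
    Summable (fun k : ℕ => (k : K) * a k * z ^ (k - 1)) := by
  have hq0 : 0 ≤ ‖z‖ / r := by positivity
  have hq1 : ‖z‖ / r < 1 := (div_lt_one hr).mpr hz
  have hg : Summable (fun k : ℕ => (‖z‖ / r) ^ (k - 1)) := by
    rw [← summable_nat_add_iff 1]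
    simpa using summable_geometric_of_lt_one hq0 hq1
  refine Summable.of_norm_bounded hg (fun k => ?_)
  rcases k with _ | m
  · simp [pow_nonneg hq0]
  · have h1 : ‖((m + 1 : ℕ) : K) * a (m + 1) * z ^ m‖ ≤ 1 * ((r ^ m)⁻¹ * ‖z‖ ^ m) := by
      rw [norm_mul, norm_mul, norm_pow, mul_assoc]
      exact mul_le_mul (IsUltrametricDist.norm_natCast_le_one K (m + 1))
        (mul_le_mul_of_nonneg_right (ha' a r hr ha m) (by positivity)) (by positivity)
        zero_le_one
    simpa [div_pow, one_mul, inv_mul_eq_div, Nat.add_sub_cancel] using h1.trans (le_of_eq (by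
      ring))

include hr ha ha0 in
private lemma diff_bound {z w : K} (hz : ‖z‖ < r) (hw : ‖w‖ < r) :
    ‖((∑' k, a k * z ^ k) - ∑' k, a k * w ^ k) - a 1 * (z - w)‖ ≤
      max ‖z‖ ‖w‖ / r * ‖z - w‖ := by
  set M := max ‖z‖ ‖w‖ with hM
  have hM0 : 0 ≤ M := le_trans (norm_nonneg z) (le_max_left _ _)
  have hMr : M < r := max_lt hz hw
  have hC0 : 0 ≤ M / r * ‖z - w‖ := by positivity
  set S := fun k : ℕ => a k * z ^ k - a k * w ^ k with hS
  have hSsum : Summable S := (summable_pow a r hr ha0 ha hz).sub (summable_pow a r hr ha0 ha hw)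
  have htsub : ((∑' k, a k * z ^ k) - ∑' k, a k * w ^ k) = ∑' k, S k :=
    (Summable.tsum_sub (summable_pow a r hr ha0 ha hz) (summable_pow a r hr ha0 ha hw)).symm
  have hS1 : S 1 = a 1 * (z - w) := by simp [hS]; ring
  have hsplit := Summable.tsum_eq_add_tsum_ite hSsum 1
  rw [htsub, hsplit, hS1, add_sub_cancel_left]
  refine IsUltrametricDist.norm_tsum_le_of_forall_le_of_nonneg hC0 (fun k => ?_)
  rcases eq_or_ne k 1 with hk | hk
  · simp [hk, hC0]
  · rw [if_neg hk]
    rcases k with _ | _ | m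
    · simp [hS, ha0, hC0]
    · exact absurd rfl hk
    · -- k = m + 2
      have hfact : z ^ (m + 2) - w ^ (m + 2) =
          (∑ i ∈ Finset.range (m + 2), z ^ i * w ^ (m + 2 - 1 - i)) * (z - w) :=
        (geom_sum₂_mul z w (m + 2)).symm
      have hgeom : ‖∑ i ∈ Finset.range (m + 2), z ^ i * w ^ (m + 2 - 1 - i)‖ ≤ M ^ (m + 1) := by
        refine IsUltrametricDist.norm_sum_le_of_forall_le_of_nonneg (by positivity)
          (fun i hi => ?_)
        rw [Finset.mem_range] at hi
        have hile : i ≤ m + 1 := by omega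
        have : ‖z ^ i * w ^ (m + 2 - 1 - i)‖ ≤ M ^ i * M ^ (m + 1 - i) := by
          rw [norm_mul, norm_pow, norm_pow]
          have h2 : m + 2 - 1 - i = m + 1 - i := by omega
          rw [h2]
          exact mul_le_mul (pow_le_pow_left₀ (norm_nonneg z) (le_max_left _ _) i)
            (pow_le_pow_left₀ (norm_nonneg w) (le_max_right _ _) _) (by positivity) (by positivity)
        refine this.trans (le_of_eq ?_)
        rw [← pow_add]
        congr 1
        omega
      have hSk : S (m + 2) = a (m + 2) * ((∑ i ∈ Finset.range (m + 2),
          z ^ i * w ^ (m + 2 - 1 - i)) * (z - w)) := by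
        rw [hS]
        dsimp only
        rw [← mul_sub, hfact]
      rw [hSk, norm_mul, norm_mul]
      have h1 : ‖a (m + 2)‖ ≤ (r ^ (m + 1))⁻¹ := ha' a r hr ha (m + 1)
      have hchain : ‖a (m + 2)‖ * (‖∑ i ∈ Finset.range (m + 2), z ^ i * w ^ (m + 2 - 1 - i)‖
          * ‖z - w‖) ≤ (r ^ (m + 1))⁻¹ * (M ^ (m + 1) * ‖z - w‖) := by
        refine mul_le_mul h1 (mul_le_mul_of_nonneg_right hgeom (norm_nonneg _))
          (by positivity) (by positivity)
      refine hchain.trans ?_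
      have hqM : (r ^ (m + 1))⁻¹ * (M ^ (m + 1) * ‖z - w‖) = (M / r) ^ (m + 1) * ‖z - w‖ := by
        rw [div_pow]
        ring
      rw [hqM]
      refine mul_le_mul_of_nonneg_right ?_ (norm_nonneg _)
      have hq0 : 0 ≤ M / r := by positivity
      have hq1 : M / r ≤ 1 := le_of_lt ((div_lt_one hr).mpr hMr)
      calc (M / r) ^ (m + 1) ≤ (M / r) ^ 1 := pow_le_pow_of_le_one hq0 hq1 (by omega)
        _ = M / r := pow_one _

include hr ha in
private lemma deriv_bound {z : K} (hz : ‖z‖ < r) :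
    ‖(∑' k : ℕ, ((k : K) * a k * z ^ (k - 1))) - a 1‖ ≤ ‖z‖ / r := by
  have hq0 : 0 ≤ ‖z‖ / r := by positivity
  have hq1 : ‖z‖ / r ≤ 1 := le_of_lt ((div_lt_one hr).mpr hz)
  set T := fun k : ℕ => (k : K) * a k * z ^ (k - 1) with hT
  have hTsum : Summable T := summable_deriv a r hr ha hz
  have hT1 : T 1 = a 1 := by simp [hT]
  have hsplit := Summable.tsum_eq_add_tsum_ite hTsum 1
  rw [hsplit, hT1, add_sub_cancel_left]
  refine IsUltrametricDist.norm_tsum_le_of_forall_le_of_nonneg hq0 (fun k => ?_)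
  rcases eq_or_ne k 1 with hk | hk
  · simp [hk, hq0]
  · rw [if_neg hk]
    rcases k with _ | _ | m
    · simp [hT, hq0]
    · exact absurd rfl hk
    · have h1 : ‖T (m + 2)‖ ≤ 1 * ((r ^ (m + 1))⁻¹ * ‖z‖ ^ (m + 1)) := by
        rw [hT]
        dsimp only
        rw [norm_mul, norm_mul, norm_pow, mul_assoc]
        have h2 : m + 2 - 1 = m + 1 := by omega
        rw [h2]
        exact mul_le_mul (IsUltrametricDist.norm_natCast_le_one K (m + 2))
          (mul_le_mul_of_nonneg_right (ha' a r hr ha (m + 1)) (by positivity)) (by positivity)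
          zero_le_one
      refine h1.trans ?_
      have heq : 1 * ((r ^ (m + 1))⁻¹ * ‖z‖ ^ (m + 1)) = (‖z‖ / r) ^ (m + 1) := by
        rw [div_pow]; field_simp
      rw [heq]
      calc (‖z‖ / r) ^ (m + 1) ≤ (‖z‖ / r) ^ 1 := pow_le_pow_of_le_one hq0 hq1 (by omega)
        _ = ‖z‖ / r := pow_one _

end Helpers

/-- A power series `f(z) = ∑_{k≥1} aₖ z^k` over `ℂ_p` with `‖aₖ‖ ≤ r^(1−k)` for all
`k` is an isometry of `B°(0,r)` if and only if `‖f'(z)‖ = 1` for all `z ∈ B°(0,r)`,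
where `f'` is the formal derivative `∑_{k≥1} k aₖ z^(k−1)`. -/
theorem isometry_iff_deriv_norm_one
    {K : Type*} [NontriviallyNormedField K] [IsUltrametricDist K] [CompleteSpace K]
    [IsAlgClosed K]
    (hdense : ∀ s t : ℝ, 0 < s → s < t → ∃ x : K, s < ‖x‖ ∧ ‖x‖ < t)
    (a : ℕ → K) (ha0 : a 0 = 0) (r : ℝ) (hr : 0 < r)
    (ha : ∀ k : ℕ, 1 ≤ k → ‖a k‖ ≤ r ^ (1 - (k : ℤ))) :
    (∀ z w : K, ‖z‖ < r → ‖w‖ < r →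
        ‖(∑' k, a k * z ^ k) - ∑' k, a k * w ^ k‖ = ‖z - w‖) ↔
      (∀ z : K, ‖z‖ < r → ‖∑' k : ℕ, ((k : K) * a k * z ^ (k - 1))‖ = 1) := by
  constructor
  · intro hiso
    -- first show ‖a 1‖ = 1
    obtain ⟨x, hx1, hx2⟩ := hdense (r / 2) r (by positivity) (by linarith)
    have hx0 : 0 < ‖x‖ := lt_trans (by positivity) hx1
    have hf0 : (∑' k, a k * (0 : K) ^ k) = 0 := by
      have h : ∀ k : ℕ, a k * (0 : K) ^ k = 0 := by
        intro k
        rcases k with _ | m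
        · simp [ha0]
        · simp
      rw [tsum_congr h, tsum_zero]
    have hfx : ‖∑' k, a k * x ^ k‖ = ‖x‖ := by
      have := hiso x 0 hx2 (by simpa using hr)
      rwa [hf0, sub_zero, sub_zero] at this
    have hdb := diff_bound a r hr ha0 ha hx2 (show ‖(0 : K)‖ < r by simpa using hr)
    rw [hf0, sub_zero, sub_zero] at hdb
    have hlt : ‖(∑' k, a k * x ^ k) - a 1 * x‖ < ‖∑' k, a k * x ^ k‖ := by
      refine lt_of_le_of_lt hdb ?_
      rw [hfx]
      have hq1 : max ‖x‖ ‖(0 : K)‖ / r < 1 := by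
        rw [div_lt_one hr]
        exact max_lt hx2 (by simpa using hr)
      calc max ‖x‖ ‖(0 : K)‖ / r * ‖x‖ < 1 * ‖x‖ :=
            mul_lt_mul_of_pos_right hq1 hx0
        _ = ‖x‖ := one_mul _
    have ha1x : ‖a 1 * x‖ = ‖x‖ := by
      rw [norm_eq_of_sub_norm_lt' hlt, hfx]
    have ha1 : ‖a 1‖ = 1 := by
      rw [norm_mul] at ha1x
      exact mul_right_cancel₀ (ne_of_gt hx0) (ha1x.trans (one_mul ‖x‖).symm)
    -- now the derivative
    intro z hz
    have hdb := deriv_bound a r hr ha hz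
    have hlt2 : ‖a 1 - ∑' k : ℕ, ((k : K) * a k * z ^ (k - 1))‖ < ‖a 1‖ := by
      rw [norm_sub_rev, ha1]
      exact lt_of_le_of_lt hdb ((div_lt_one hr).mpr hz)
    rw [norm_eq_of_sub_norm_lt' hlt2, ha1]
  · intro hderiv
    -- evaluate at z = 0 to get ‖a 1‖ = 1
    have hd0 := hderiv 0 (by simpa using hr)
    have hev : (∑' k : ℕ, ((k : K) * a k * (0 : K) ^ (k - 1))) = a 1 := by
      refine (tsum_eq_single 1 fun b hb => ?_).trans (by simp)
      rcases b with _ | _ | m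
      · simp
      · exact absurd rfl hb
      · simp
    have ha1 : ‖a 1‖ = 1 := by rwa [hev] at hd0
    intro z w hz hw
    rcases eq_or_ne z w with hzw | hzw
    · simp [hzw]
    · have hzw0 : 0 < ‖z - w‖ := by
        rw [norm_pos_iff]
        exact sub_ne_zero_of_ne hzw
      have hdb := diff_bound a r hr ha0 ha hz hw
      have hlt : ‖a 1 * (z - w) - ((∑' k, a k * z ^ k) - ∑' k, a k * w ^ k)‖
          < ‖a 1 * (z - w)‖ := by
        rw [norm_sub_rev, norm_mul, ha1, one_mul]
        refine lt_of_le_of_lt hdb ?_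
        have hq1 : max ‖z‖ ‖w‖ / r < 1 := by
          rw [div_lt_one hr]
          exact max_lt hz hw
        calc max ‖z‖ ‖w‖ / r * ‖z - w‖ < 1 * ‖z - w‖ :=
              mul_lt_mul_of_pos_right hq1 hzw0
          _ = ‖z - w‖ := one_mul _
      rw [norm_eq_of_sub_norm_lt' hlt, norm_mul, ha1, one_mul]
end
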